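/- Let N ∈ ℝ³ be a unit vector, d ∈ ℝ, V a finite index set, f : V → ℝ³ with ⟨f_i, N⟩ = d for all i ∈ V, and u : V → ℝ. Then there exist v, w ∈ ℝ³ such that u_i N = v + w × f_i for all i ∈ V if and only if there exist a ∈ ℝ³ with ⟨a, N⟩ = 0 and c ∈ ℝ such that u_i = ⟨a, f_i⟩ + c for all i ∈ V. -/

import Mathlib

open scoped RealInnerProductSpace

/-- The cross product on Euclidean three-space. -/
noncomputable def cross (x y : EuclideanSpace ℝ (Fin 3)) : EuclideanSpace ℝ (Fin 3) :=
  (WithLp.equiv 2 (Fin 3 → ℝ)).symm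
    ![x 1 * y 2 - x 2 * y 1, x 2 * y 0 - x 0 * y 2, x 0 * y 1 - x 1 * y 0]

lemma inner3 (x y : EuclideanSpace ℝ (Fin 3)) :
    ⟪x, y⟫ = x 0 * y 0 + x 1 * y 1 + x 2 * y 2 := by
  simp [PiLp.inner_apply, Fin.sum_univ_three, RCLike.inner_apply, mul_comm]

lemma cross3_apply (x y : EuclideanSpace ℝ (Fin 3)) (j : Fin 3) :
    cross x y j = ![x 1 * y 2 - x 2 * y 1, x 2 * y 0 - x 0 * y 2,
      x 0 * y 1 - x 1 * y 0] j := rfl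

lemma eq3 {x y : EuclideanSpace ℝ (Fin 3)} (h0 : x 0 = y 0) (h1 : x 1 = y 1)
    (h2 : x 2 = y 2) : x = y := by
  ext j
  fin_cases j
  exacts [h0, h1, h2]

/-- For a planar mesh `f : V → ℝ³` lying in the plane `⟨x, N⟩ = d`, the
normal deformation `u N` is induced by an infinitesimal Euclidean motion
`x ↦ v + w × x` iff `u` is an affine function `u = ⟨a, f⟩ + c` with `a ⊥ N`. -/
theorem stmt_15 (N : EuclideanSpace ℝ (Fin 3)) (hN : ‖N‖ = 1) (d : ℝ)
    {V : Type*} [Fintype V] (f : V → EuclideanSpace ℝ (Fin 3))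
    (hf : ∀ i, ⟪f i, N⟫ = d) (u : V → ℝ) :
    (∃ v w : EuclideanSpace ℝ (Fin 3), ∀ i, u i • N = v + cross w (f i)) ↔
    (∃ a : EuclideanSpace ℝ (Fin 3), ⟪a, N⟫ = 0 ∧
      ∃ c : ℝ, ∀ i, u i = ⟪a, f i⟫ + c) := by
  have hNN : N 0 * N 0 + N 1 * N 1 + N 2 * N 2 = 1 := by
    have := real_inner_self_eq_norm_sq N
    rw [hN, inner3] at this; linarith
  constructor
  · rintro ⟨v, w, h⟩
    refine ⟨cross N w, ?_, ⟪v, N⟫, fun i => ?_⟩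
    · rw [inner3]
      simp only [cross3_apply, Matrix.cons_val_zero, Matrix.cons_val_one, Matrix.head_cons,
        Matrix.cons_val_two, Matrix.tail_cons]
      ring
    · have h0 : u i * N 0 = v 0 + cross w (f i) 0 := congrArg (fun z => z 0) (h i)
      have h1 : u i * N 1 = v 1 + cross w (f i) 1 := congrArg (fun z => z 1) (h i)
      have h2 : u i * N 2 = v 2 + cross w (f i) 2 := congrArg (fun z => z 2) (h i)
      simp only [cross3_apply] at h0 h1 h2
      rw [inner3, inner3]
      simp only [cross3_apply, Matrix.cons_val_zero, Matrix.cons_val_one, Matrix.head_cons,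
        Matrix.cons_val_two, Matrix.tail_cons] at h0 h1 h2 ⊢
      linear_combination N 0 * h0 + N 1 * h1 + N 2 * h2 - u i * hNN
  · rintro ⟨a, ha, c, h⟩
    rw [inner3] at ha
    refine ⟨c • N + d • a, cross a N, fun i => ?_⟩
    have hfi := hf i; rw [inner3] at hfi
    have hui := h i; rw [inner3] at hui
    apply eq3
    · show u i * N 0 = c * N 0 + d * a 0 + cross (cross a N) (f i) 0
      simp only [cross3_apply, Matrix.cons_val_zero, Matrix.cons_val_one, Matrix.head_cons,
        Matrix.cons_val_two, Matrix.tail_cons]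
      linear_combination N 0 * hui + a 0 * hfi
    · show u i * N 1 = c * N 1 + d * a 1 + cross (cross a N) (f i) 1
      simp only [cross3_apply, Matrix.cons_val_zero, Matrix.cons_val_one, Matrix.head_cons,
        Matrix.cons_val_two, Matrix.tail_cons]
      linear_combination N 1 * hui + a 1 * hfi
    · show u i * N 2 = c * N 2 + d * a 2 + cross (cross a N) (f i) 2
      simp only [cross3_apply, Matrix.cons_val_zero, Matrix.cons_val_one, Matrix.head_cons,
        Matrix.cons_val_two, Matrix.tail_cons]
      linear_combination N 2 * hui + a 2 * hfi
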